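/- For roots w of φ₁ and v of φ₂, the transpose of the double ideal matrix H*_{φ₁,φ₂}(f₁,f₂) maps (1, w, …, w^{n₁−1}, 0, …, 0)ᵀ to f₁(w)·(1, w, …, w^{m−1})ᵀ and maps (0, …, 0, 1, v, …, v^{n₂−1})ᵀ to f₂(v)·(1, v, …, v^{m−1})ᵀ. -/
import Mathlib


open Polynomial Matrix

/-- The rotation matrix `H_φ` of a monic polynomial
`φ(x) = xⁿ − φ_{n-1}x^{n-1} − ⋯ − φ₁x − φ₀` (note `φᵢ = -(coeff φ i)` for `i < n`). -/
def rotMat (n : ℕ) (φ : Polynomial ℂ) : Matrix (Fin n) (Fin n) ℂ :=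
  Matrix.of fun i j =>
    if (j : ℕ) + 1 < n then (if (i : ℕ) = (j : ℕ) + 1 then 1 else 0)
    else -φ.coeff (i : ℕ)

/-- The polynomial `f(x) = Σ_{j=0}^{n-1} fⱼ xʲ` associated to a vector `f`. -/
noncomputable def vecPoly (n : ℕ) (f : Fin n → ℂ) : Polynomial ℂ :=
  ∑ j : Fin n, Polynomial.C (f j) * Polynomial.X ^ (j : ℕ)

/-- The `(n₁+n₂) × m` double ideal matrix, stacking `[f₁, H₁f₁, …, H₁^{m-1}f₁]`
on top of `[f₂, H₂f₂, …, H₂^{m-1}f₂]`. -/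
noncomputable def dblIdealMat (n₁ n₂ m : ℕ) (H₁ : Matrix (Fin n₁) (Fin n₁) ℂ)
    (H₂ : Matrix (Fin n₂) (Fin n₂) ℂ) (f₁ : Fin n₁ → ℂ) (f₂ : Fin n₂ → ℂ) :
    Matrix (Fin n₁ ⊕ Fin n₂) (Fin m) ℂ :=
  Matrix.of fun i j =>
    Sum.elim ((H₁ ^ (j : ℕ)).mulVec f₁) ((H₂ ^ (j : ℕ)).mulVec f₂) i

lemma rot_key (n : ℕ) (φ : Polynomial ℂ) (hm : φ.Monic)
    (hd : φ.natDegree = n) (w : ℂ) (hw : φ.IsRoot w) (g : Fin n → ℂ) :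
    ∑ i : Fin n, w ^ (i : ℕ) * (rotMat n φ).mulVec g i
      = w * ∑ i : Fin n, w ^ (i : ℕ) * g i := by
  have hroot : ∑ i : Fin n, φ.coeff (i : ℕ) * w ^ (i : ℕ) + w ^ n = 0 := by
    have := hw
    rw [IsRoot, eval_eq_sum_range, hd, Finset.sum_range_succ] at this
    rw [Fin.sum_univ_eq_sum_range (fun i => φ.coeff i * w ^ i)]
    have hc : φ.coeff n = 1 := by
      have := hm.coeff_natDegree; rwa [hd] at this
    rw [hc] at this; simpa using this
  simp only [rotMat, mulVec, dotProduct, Matrix.of_apply]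
  simp only [Finset.mul_sum]
  rw [Finset.sum_comm]
  apply Finset.sum_congr rfl
  intro k _
  by_cases hk : (k : ℕ) + 1 < n
  · simp only [if_pos hk]
    rw [Finset.sum_eq_single (⟨(k : ℕ) + 1, hk⟩ : Fin n)]
    · simp [pow_succ]; ring
    · intro b _ hb
      have : ¬ ((b : ℕ) = (k : ℕ) + 1) := by
        intro h; apply hb; exact Fin.ext h
      simp [this]
    · simp
  · have hkn : (k : ℕ) + 1 = n := le_antisymm k.2 (not_lt.mp hk)
    simp only [if_neg hk]
    have : ∑ i : Fin n, w ^ (i : ℕ) * (-φ.coeff (i : ℕ) * g k)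
        = w ^ n * g k := by
      have : ∑ i : Fin n, w ^ (i : ℕ) * (-φ.coeff (i : ℕ) * g k)
          = -(∑ i : Fin n, φ.coeff (i : ℕ) * w ^ (i : ℕ)) * g k := by
        rw [neg_mul, Finset.sum_mul, ← Finset.sum_neg_distrib]
        exact Finset.sum_congr rfl fun i _ => by ring
      rw [this]
      have h2 : -(∑ i : Fin n, φ.coeff (i : ℕ) * w ^ (i : ℕ)) = w ^ n := by
        linear_combination -hroot
      rw [h2]
    rw [this]
    have : w * (w ^ (k : ℕ) * g k) = w ^ ((k : ℕ) + 1) * g k := by ring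
    rw [this, hkn]

lemma rot_key_pow (n : ℕ) (φ : Polynomial ℂ) (hm : φ.Monic)
    (hd : φ.natDegree = n) (w : ℂ) (hw : φ.IsRoot w) (g : Fin n → ℂ) (j : ℕ) :
    ∑ i : Fin n, w ^ (i : ℕ) * ((rotMat n φ) ^ j).mulVec g i
      = w ^ j * ∑ i : Fin n, w ^ (i : ℕ) * g i := by
  induction j generalizing g with
  | zero => simp [mulVec_one]
  | succ j ih =>
    rw [pow_succ, ← mulVec_mulVec, ih, rot_key n φ hm hd w hw, pow_succ]
    ring

/-- For roots `w` of `φ₁` and `v` of `φ₂`, the transpose of the double ideal matrix maps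
`(1, w, …, w^{n₁−1}, 0, …, 0)ᵀ` to `f₁(w)·(1, w, …, w^{m−1})ᵀ` and maps
`(0, …, 0, 1, v, …, v^{n₂−1})ᵀ` to `f₂(v)·(1, v, …, v^{m−1})ᵀ`. -/
theorem dblIdealMat_transpose_mulVec (n₁ n₂ m : ℕ) (hn₁ : 0 < n₁) (hn₂ : 0 < n₂)
    (φ₁ φ₂ : Polynomial ℂ) (hm₁ : φ₁.Monic) (hm₂ : φ₂.Monic)
    (hd₁ : φ₁.natDegree = n₁) (hd₂ : φ₂.natDegree = n₂)
    (h₁0 : φ₁.coeff 0 ≠ 0) (h₂0 : φ₂.coeff 0 ≠ 0)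
    (f₁ : Fin n₁ → ℂ) (f₂ : Fin n₂ → ℂ)
    (w v : ℂ) (hw : φ₁.IsRoot w) (hv : φ₂.IsRoot v) :
    (dblIdealMat n₁ n₂ m (rotMat n₁ φ₁) (rotMat n₂ φ₂) f₁ f₂)ᵀ.mulVec
        (Sum.elim (fun a : Fin n₁ => w ^ (a : ℕ)) (fun _ : Fin n₂ => 0)) =
      (∑ j : Fin n₁, f₁ j * w ^ (j : ℕ)) • (fun i : Fin m => w ^ (i : ℕ)) ∧
    (dblIdealMat n₁ n₂ m (rotMat n₁ φ₁) (rotMat n₂ φ₂) f₁ f₂)ᵀ.mulVec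
        (Sum.elim (fun _ : Fin n₁ => 0) (fun b : Fin n₂ => v ^ (b : ℕ))) =
      (∑ j : Fin n₂, f₂ j * v ^ (j : ℕ)) • (fun i : Fin m => v ^ (i : ℕ)) := by
  constructor
  · funext i
    simp only [mulVec, dotProduct, transpose_apply, dblIdealMat, Matrix.of_apply,
      Fintype.sum_sum_type, Sum.elim_inl, Sum.elim_inr, mul_zero, Finset.sum_const_zero,
      add_zero, Pi.smul_apply, smul_eq_mul]
    have := rot_key_pow n₁ φ₁ hm₁ hd₁ w hw f₁ (i : ℕ)
    calc ∑ a : Fin n₁, ((rotMat n₁ φ₁) ^ (i : ℕ)).mulVec f₁ a * w ^ (a : ℕ)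
        = ∑ a : Fin n₁, w ^ (a : ℕ) * ((rotMat n₁ φ₁) ^ (i : ℕ)).mulVec f₁ a := by
          exact Finset.sum_congr rfl fun a _ => mul_comm _ _
      _ = w ^ (i : ℕ) * ∑ a : Fin n₁, w ^ (a : ℕ) * f₁ a := this
      _ = (∑ j : Fin n₁, f₁ j * w ^ (j : ℕ)) * w ^ (i : ℕ) := by
          rw [mul_comm]
          congr 1
          exact Finset.sum_congr rfl fun a _ => mul_comm _ _
  · funext i
    simp only [mulVec, dotProduct, transpose_apply, dblIdealMat, Matrix.of_apply,
      Fintype.sum_sum_type, Sum.elim_inl, Sum.elim_inr, mul_zero, Finset.sum_const_zero,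
      zero_add, Pi.smul_apply, smul_eq_mul]
    have := rot_key_pow n₂ φ₂ hm₂ hd₂ v hv f₂ (i : ℕ)
    calc ∑ a : Fin n₂, ((rotMat n₂ φ₂) ^ (i : ℕ)).mulVec f₂ a * v ^ (a : ℕ)
        = ∑ a : Fin n₂, v ^ (a : ℕ) * ((rotMat n₂ φ₂) ^ (i : ℕ)).mulVec f₂ a := by
          exact Finset.sum_congr rfl fun a _ => mul_comm _ _
      _ = v ^ (i : ℕ) * ∑ a : Fin n₂, v ^ (a : ℕ) * f₂ a := this
      _ = (∑ j : Fin n₂, f₂ j * v ^ (j : ℕ)) * v ^ (i : ℕ) := by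
          rw [mul_comm]
          congr 1
          exact Finset.sum_congr rfl fun a _ => mul_comm _ _
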